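/- Let k > 0, let q be a nonnegative integer, and let D ⊂ ℝ² be a bounded measurable set. Then there exist constants C > 0 and R > 0 such that for every z ∈ ℝ² with dist(z, D) ≥ R, Σ_{s + t ≤ q} ∫_D |∂_{x₁}^{s} ∂_{x₂}^{t} J₀(k |x − z|)|² dx ≤ C / dist(z, D), where the sum is over all pairs of nonnegative integers (s, t) with s + t ≤ q and the derivatives are taken on ℝ² \ {z}. (This extends the H⁴ estimate to the H^q(D)-norm for any q ∈ ℕ.) -/

import Mathlib

open Complex Real MeasureTheory
open scoped RealInnerProductSpace InnerProductSpace

/-- The Bessel function of the first kind of integer order `n`, via the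
integral representation `J_n(t) = (1/(2π)) ∫_{−π}^{π} exp(i(t sin φ − n φ)) dφ`. -/
noncomputable def besselJ (n : ℤ) (t : ℝ) : ℂ :=
  (1 / (2 * Real.pi)) *
    ∫ φ in (-Real.pi)..Real.pi,
      Complex.exp (Complex.I * ((t : ℂ) * (Real.sin φ : ℂ) - (n : ℂ) * (φ : ℂ)))

/-- The unit direction vector `d(φ) = (cos φ, sin φ)` in the Euclidean plane. -/
noncomputable def dir (φ : ℝ) : EuclideanSpace ℝ (Fin 2) :=
  (WithLp.equiv 2 (Fin 2 → ℝ)).symm ![Real.cos φ, Real.sin φ]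

/-- First-order partial derivative in the `i`-th coordinate direction. -/
noncomputable def pd (i : Fin 2) (f : EuclideanSpace ℝ (Fin 2) → ℂ) :
    EuclideanSpace ℝ (Fin 2) → ℂ :=
  fun x => fderiv ℝ f x (EuclideanSpace.single i 1)

set_option maxHeartbeats 1000000
set_option synthInstance.maxHeartbeats 1000000
open intervalIntegral

lemma dir_zero (φ : ℝ) : dir φ 0 = Real.cos φ := rfl
lemma dir_one (φ : ℝ) : dir φ 1 = Real.sin φ := rfl

lemma norm_exp_I_mul_real (a : ℝ) : ‖Complex.exp (Complex.I * a)‖ = 1 := by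
  rw [show Complex.I * a = (a : ℂ) * Complex.I by ring]
  simpa using Complex.abs_exp_ofReal_mul_I a

lemma inner_dir (v : EuclideanSpace ℝ (Fin 2)) (φ : ℝ) :
    (inner ℝ v (dir φ) : ℝ) = v 0 * Real.cos φ + v 1 * Real.sin φ := by
  simp [PiLp.inner_apply, Fin.sum_univ_two, dir_zero, dir_one, RCLike.inner_apply,
    mul_comm]

lemma norm_dir (φ : ℝ) : ‖dir φ‖ = 1 := by
  have : ‖dir φ‖ = Real.sqrt (Real.cos φ ^ 2 + Real.sin φ ^ 2) := by
    rw [EuclideanSpace.norm_eq]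
    simp [Fin.sum_univ_two, dir_zero, dir_one, sq_abs, sq]
  rw [this, Real.cos_sq_add_sin_sq, Real.sqrt_one]

lemma exists_polar (v : EuclideanSpace ℝ (Fin 2)) :
    ∃ θ : ℝ, v 0 = ‖v‖ * Real.cos θ ∧ v 1 = ‖v‖ * Real.sin θ := by
  by_cases hv : v = 0
  · exact ⟨0, by simp [hv]⟩
  set w : ℂ := ⟨v 0, v 1⟩ with hw
  have habs : ‖w‖ = ‖v‖ := by
    rw [Complex.norm_def, Complex.normSq_apply, EuclideanSpace.norm_eq]
    simp [Fin.sum_univ_two, sq_abs, sq, hw]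
  have hw0 : w ≠ 0 := by
    intro h
    apply hv
    have : ‖w‖ = 0 := by simp [h]
    rw [habs] at this
    exact norm_eq_zero.mp this
  refine ⟨Complex.arg w, ?_, ?_⟩
  · have := Complex.cos_arg hw0
    rw [habs] at this
    have h0 : ‖v‖ ≠ 0 := by simpa [habs] using (norm_ne_zero_iff.mpr hw0)
    rw [this, mul_div_cancel₀ _ h0]
  · have := Complex.sin_arg w
    rw [habs] at this
    have h0 : ‖v‖ ≠ 0 := by simpa [habs] using (norm_ne_zero_iff.mpr hw0)
    rw [this, mul_div_cancel₀ _ h0]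

-- shift lemma
lemma shift_integral (c : ℝ → ℂ) (hc : Function.Periodic c (2 * Real.pi)) (t θ : ℝ) :
    ∫ φ in (-Real.pi)..Real.pi, c φ * Complex.exp (Complex.I * t * ((Real.cos (φ - θ) : ℝ) : ℂ))
      = ∫ ψ in (-Real.pi)..Real.pi, c (ψ + θ) * Complex.exp (Complex.I * t * ((Real.cos ψ : ℝ) : ℂ)) := by
  set g : ℝ → ℂ := fun ψ => c (ψ + θ) * Complex.exp (Complex.I * t * ((Real.cos ψ : ℝ) : ℂ)) with hg
  have h1 : ∀ φ : ℝ, c φ * Complex.exp (Complex.I * t * ((Real.cos (φ - θ) : ℝ) : ℂ)) = g (φ - θ) := by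
    intro φ; simp [hg, sub_add_cancel]
  rw [intervalIntegral.integral_congr (g := fun φ => g (φ - θ)) (fun x _ => h1 x)]
  rw [intervalIntegral.integral_comp_sub_right g θ]
  have hper : Function.Periodic g (2 * Real.pi) := by
    intro x
    simp only [hg]
    rw [Real.cos_add_two_pi]
    congr 1
    have := hc (x + θ)
    simpa [add_comm, add_assoc, add_left_comm] using this
  have := hper.intervalIntegral_add_eq (-Real.pi - θ) (-Real.pi)
  rw [show -Real.pi - θ + 2 * Real.pi = Real.pi - θ by ring, show -Real.pi + 2 * Real.pi = Real.pi by ring] at this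
  exact this

noncomputable def gInt (k : ℝ) (c : ℝ → ℂ) (z y : EuclideanSpace ℝ (Fin 2)) : ℂ :=
  (1 / (2 * Real.pi) : ℝ) *
    ∫ φ in (-Real.pi)..Real.pi,
      c φ * Complex.exp (Complex.I * (k : ℂ) * ((inner ℝ (y - z) (dir φ) : ℝ) : ℂ))

lemma besselJ_eq_gInt (k : ℝ) (z y : EuclideanSpace ℝ (Fin 2)) :
    besselJ 0 (k * ‖y - z‖) = gInt k (fun _ => 1) z y := by
  obtain ⟨θ, h0, h1⟩ := exists_polar (y - z)
  set r : ℝ := ‖y - z‖ with hr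
  have hinner : ∀ φ : ℝ, (inner ℝ (y - z) (dir φ) : ℝ) = r * Real.cos (φ - θ) := by
    intro φ
    rw [inner_dir, h0, h1, Real.cos_sub]
    ring
  have hsin : ∀ φ : ℝ, Real.sin φ = Real.cos (φ - Real.pi / 2) := by
    intro φ; rw [Real.cos_sub]; simp
  have key1 : (∫ φ in (-Real.pi)..Real.pi,
      Complex.exp (Complex.I * (((k * r : ℝ) : ℂ) * (Real.sin φ : ℂ) - (0 : ℂ) * (φ : ℂ))))
      = ∫ ψ in (-Real.pi)..Real.pi, (1 : ℂ) * Complex.exp (Complex.I * (k * r : ℝ) * ((Real.cos ψ : ℝ) : ℂ)) := by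
    have := shift_integral (fun _ => 1) (by intro x; rfl) (k * r) (Real.pi / 2)
    rw [← this]
    apply intervalIntegral.integral_congr
    intro φ _
    simp only [one_mul]
    rw [← hsin φ]
    push_cast
    ring_nf
  have key2 : (∫ φ in (-Real.pi)..Real.pi,
      (1 : ℂ) * Complex.exp (Complex.I * (k : ℂ) * ((inner ℝ (y - z) (dir φ) : ℝ) : ℂ)))
      = ∫ ψ in (-Real.pi)..Real.pi, (1 : ℂ) * Complex.exp (Complex.I * (k * r : ℝ) * ((Real.cos ψ : ℝ) : ℂ)) := by
    have := shift_integral (fun _ => 1) (by intro x; rfl) (k * r) θ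
    rw [← this]
    apply intervalIntegral.integral_congr
    intro φ _
    simp only [one_mul]
    rw [hinner φ]
    push_cast
    ring_nf
  unfold besselJ gInt
  rw [key2]
  simp only [Int.cast_zero]
  rw [key1]
  push_cast
  ring_nf

section deriv

variable (k : ℝ) (c : ℝ → ℂ) (z : EuclideanSpace ℝ (Fin 2))

lemma norm_smul_CLM (a : ℂ) (L : EuclideanSpace ℝ (Fin 2) →L[ℝ] ℂ) : ‖a • L‖ ≤ ‖a‖ * ‖L‖ := by
  apply ContinuousLinearMap.opNorm_le_bound _ (by positivity)
  intro u
  rw [ContinuousLinearMap.smul_apply, norm_smul, mul_assoc]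
  exact mul_le_mul_of_nonneg_left (L.le_opNorm u) (norm_nonneg a)

noncomputable def Lmap (t : ℝ) : EuclideanSpace ℝ (Fin 2) →L[ℝ] ℂ :=
  (Complex.I * (k : ℂ)) • (Complex.ofRealCLM.comp (innerSL ℝ (dir t)))

lemma continuous_dir : Continuous dir := by
  unfold dir
  apply Continuous.comp (PiLp.continuous_toLp 2 (fun _ : Fin 2 => ℝ))
  apply continuous_pi
  intro i
  fin_cases i <;> simp <;> continuity

lemma continuous_Lmap : Continuous (Lmap k) := by
  unfold Lmap
  refine Continuous.const_smul (g := fun t => Complex.ofRealCLM.comp (innerSL ℝ (dir t))) ?_ (Complex.I * (k : ℂ))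
  have h1 : Continuous (fun t => innerSL ℝ (dir t)) := (innerSL ℝ).continuous.comp continuous_dir
  exact ((ContinuousLinearMap.compL ℝ (EuclideanSpace ℝ (Fin 2)) ℝ ℂ Complex.ofRealCLM).continuous).comp h1

lemma Lmap_apply (t : ℝ) (u : EuclideanSpace ℝ (Fin 2)) :
    Lmap k t u = Complex.I * k * ((inner ℝ (dir t) u : ℝ) : ℂ) := by
  simp [Lmap, mul_comm]

lemma norm_Lmap_le (t : ℝ) : ‖Lmap k t‖ ≤ |k| := by
  apply ContinuousLinearMap.opNorm_le_bound _ (abs_nonneg k)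
  intro u
  rw [Lmap_apply]
  have h1 : ‖Complex.I * (k : ℂ) * ((inner ℝ (dir t) u : ℝ) : ℂ)‖ = |k| * |(inner ℝ (dir t) u : ℝ)| := by
    rw [norm_mul, norm_mul, Complex.norm_I, one_mul, Complex.norm_real, Complex.norm_real,
      Real.norm_eq_abs, Real.norm_eq_abs]
  rw [h1]
  have h2 : |(inner ℝ (dir t) u : ℝ)| ≤ ‖dir t‖ * ‖u‖ := abs_real_inner_le_norm _ _
  rw [norm_dir, one_mul] at h2
  exact mul_le_mul_of_nonneg_left h2 (abs_nonneg k)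

lemma phase_eq (x : EuclideanSpace ℝ (Fin 2)) (t : ℝ) :
    Complex.I * (k : ℂ) * ((inner ℝ (x - z) (dir t) : ℝ) : ℂ) = Lmap k t x - Lmap k t z := by
  rw [Lmap_apply, Lmap_apply]
  have : (inner ℝ (x - z) (dir t) : ℝ) = (inner ℝ (dir t) x : ℝ) - (inner ℝ (dir t) z : ℝ) := by
    rw [real_inner_comm, inner_sub_right]
  rw [this]
  push_cast
  ring

lemma norm_integrand (x : EuclideanSpace ℝ (Fin 2)) (t : ℝ) :
    ‖c t * Complex.exp (Complex.I * (k : ℂ) * ((inner ℝ (x - z) (dir t) : ℝ) : ℂ))‖ = ‖c t‖ := by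
  rw [norm_mul]
  have : Complex.I * (k : ℂ) * ((inner ℝ (x - z) (dir t) : ℝ) : ℂ)
      = Complex.I * ((k * (inner ℝ (x - z) (dir t) : ℝ) : ℝ) : ℂ) := by push_cast; ring
  rw [this, norm_exp_I_mul_real, mul_one]

lemma continuous_phase_inner (x : EuclideanSpace ℝ (Fin 2)) :
    Continuous (fun t : ℝ => (inner ℝ (x - z) (dir t) : ℝ)) := by
  simp only [inner_dir]
  continuity

variable (hc : Continuous c)
include hc

lemma continuous_integrand (x : EuclideanSpace ℝ (Fin 2)) :
    Continuous (fun t : ℝ =>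
      c t * Complex.exp (Complex.I * (k : ℂ) * ((inner ℝ (x - z) (dir t) : ℝ) : ℂ))) := by
  apply hc.mul
  apply Continuous.cexp
  exact continuous_const.mul (Complex.continuous_ofReal.comp (continuous_phase_inner z x))

lemma hasFDerivAt_gInt (y : EuclideanSpace ℝ (Fin 2)) :
    HasFDerivAt (gInt k c z)
      (((1 / (2 * Real.pi) : ℝ) : ℂ) •
        ∫ t in (-Real.pi)..Real.pi,
          (c t * Complex.exp (Complex.I * (k : ℂ) * ((inner ℝ (y - z) (dir t) : ℝ) : ℂ))) • Lmap k t) y := by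
  have key : HasFDerivAt
      (fun x => ∫ t in (-Real.pi)..Real.pi,
        c t * Complex.exp (Complex.I * (k : ℂ) * ((inner ℝ (x - z) (dir t) : ℝ) : ℂ)))
      (∫ t in (-Real.pi)..Real.pi,
        (c t * Complex.exp (Complex.I * (k : ℂ) * ((inner ℝ (y - z) (dir t) : ℝ) : ℂ))) • Lmap k t) y := by
    apply intervalIntegral.hasFDerivAt_integral_of_dominated_of_fderiv_le
      (F' := fun x t => (c t * Complex.exp (Complex.I * (k : ℂ) * ((inner ℝ (x - z) (dir t) : ℝ) : ℂ))) • Lmap k t)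
      (bound := fun t => |k| * ‖c t‖) (s := Metric.ball y 1) (Metric.ball_mem_nhds y one_pos)
    · filter_upwards with x
      exact (continuous_integrand k c z hc x).aestronglyMeasurable
    · exact (continuous_integrand k c z hc y).intervalIntegrable _ _
    · apply Continuous.aestronglyMeasurable
      refine Continuous.smul (f := fun t => c t * Complex.exp (Complex.I * (k : ℂ) * ((inner ℝ (y - z) (dir t) : ℝ) : ℂ))) (g := Lmap k) ?_ ?_
      · exact continuous_integrand k c z hc y
      · exact continuous_Lmap k
    · filter_upwards with t _
      intro x _
      refine le_trans (norm_smul_CLM _ _) ?_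
      rw [norm_integrand]
      calc ‖c t‖ * ‖Lmap k t‖ ≤ ‖c t‖ * |k| :=
            mul_le_mul_of_nonneg_left (norm_Lmap_le k t) (norm_nonneg _)
        _ = |k| * ‖c t‖ := mul_comm _ _
    · exact (continuous_const.mul hc.norm).intervalIntegrable _ _
    · filter_upwards with t _
      intro x _
      have h0 : HasFDerivAt (fun x : EuclideanSpace ℝ (Fin 2) => Lmap k t x - Lmap k t z)
          (Lmap k t) x := (Lmap k t).hasFDerivAt.sub_const _
      have h1 := h0.cexp
      have h2 := h1.const_mul (c t)
      have hfun : (fun x : EuclideanSpace ℝ (Fin 2) =>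
          c t * Complex.exp (Lmap k t x - Lmap k t z)) =
          (fun x => c t * Complex.exp (Complex.I * (k : ℂ) * ((inner ℝ (x - z) (dir t) : ℝ) : ℂ))) := by
        funext x
        rw [phase_eq]
      rw [hfun] at h2
      refine h2.congr_fderiv ?_
      rw [phase_eq, smul_smul]
  unfold gInt
  exact key.const_mul _

lemma continuous_gInt : Continuous (gInt k c z) :=
  continuous_iff_continuousAt.mpr fun y => (hasFDerivAt_gInt k c z hc y).differentiableAt.continuousAt

lemma pd_gInt (i : Fin 2) :
    pd i (gInt k c z) = gInt k (fun t => (Complex.I * (k : ℂ) * ((dir t i : ℝ) : ℂ)) * c t) z := by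
  funext y
  unfold pd
  rw [(hasFDerivAt_gInt k c z hc y).fderiv]
  have hint : IntervalIntegrable
      (fun t => (c t * Complex.exp (Complex.I * (k : ℂ) * ((inner ℝ (y - z) (dir t) : ℝ) : ℂ))) • Lmap k t)
      volume (-Real.pi) Real.pi := by
    apply Continuous.intervalIntegrable
    exact (continuous_integrand k c z hc y).smul (continuous_Lmap k)
  rw [ContinuousLinearMap.smul_apply]
  rw [ContinuousLinearMap.intervalIntegral_apply hint (EuclideanSpace.single i 1)]
  unfold gInt
  simp only [smul_eq_mul]
  congr 1
  apply intervalIntegral.integral_congr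
  intro t _
  simp only [ContinuousLinearMap.smul_apply, smul_eq_mul]
  rw [Lmap_apply]
  have : (inner ℝ (dir t) (EuclideanSpace.single i (1:ℝ)) : ℝ) = dir t i := by
    rw [real_inner_comm]
    simp [EuclideanSpace.inner_single_left]
  rw [this]
  ring

end deriv

lemma sin_lower {δ ψ : ℝ} (hδ0 : 0 < δ) (hδ : δ ≤ Real.pi / 2) (h1 : δ ≤ ψ)
    (h2 : ψ ≤ Real.pi - δ) : Real.sin δ ≤ Real.sin ψ := by
  rcases le_total ψ (Real.pi / 2) with h | h
  · apply Real.sin_le_sin_of_le_of_le_pi_div_two (by linarith) h h1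
  · rw [← Real.sin_pi_sub ψ]
    apply Real.sin_le_sin_of_le_of_le_pi_div_two (by linarith) (by linarith) (by linarith)

lemma integral_inv_sin_sq {δ : ℝ} (hδ0 : 0 < δ) (hδ : δ ≤ Real.pi / 2) :
    ∫ ψ in δ..(Real.pi - δ), (Real.sin ψ)⁻¹ ^ 2 = 2 * Real.cos δ / Real.sin δ := by
  have hsδ : 0 < Real.sin δ := Real.sin_pos_of_pos_of_lt_pi hδ0 (by linarith [Real.pi_pos])
  have key : ∀ ψ ∈ Set.uIcc δ (Real.pi - δ),
      HasDerivAt (fun x => -Real.cos x / Real.sin x) ((Real.sin ψ)⁻¹ ^ 2) ψ := by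
    intro ψ hψ
    rw [Set.uIcc_of_le (by linarith)] at hψ
    have hs : Real.sin ψ ≠ 0 := by
      have := sin_lower hδ0 hδ hψ.1 hψ.2; linarith
    have h := ((Real.hasDerivAt_cos ψ).neg).div (Real.hasDerivAt_sin ψ) hs
    refine h.congr_deriv ?_
    rw [inv_pow, div_eq_iff (pow_ne_zero 2 hs), inv_mul_cancel₀ (pow_ne_zero 2 hs), Pi.neg_apply]
    rw [← Real.sin_sq_add_cos_sq ψ]
    ring
  rw [intervalIntegral.integral_eq_sub_of_hasDerivAt key]
  · rw [Real.sin_pi_sub, Real.cos_pi_sub]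
    field_simp
    ring
  · apply ContinuousOn.intervalIntegrable
    apply ContinuousOn.pow
    apply ContinuousOn.inv₀ (Real.continuous_sin.continuousOn)
    intro ψ hψ
    rw [Set.uIcc_of_le (by linarith)] at hψ
    have := sin_lower hδ0 hδ hψ.1 hψ.2; linarith

lemma ibp_piece (b b' : ℝ → ℂ) (M T δ : ℝ)
    (hb : ∀ x, HasDerivAt b (b' x) x) (hb'c : Continuous b')
    (hM : ∀ x, ‖b x‖ ≤ M) (hM' : ∀ x, ‖b' x‖ ≤ M)
    (hT : 1 ≤ T) (hδ0 : 0 < δ) (hδ : δ ≤ Real.pi / 2) :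
    ‖∫ ψ in δ..(Real.pi - δ), b ψ * Complex.exp (Complex.I * T * ((Real.cos ψ : ℝ) : ℂ))‖
      ≤ 6 * M / (T * Real.sin δ) := by
  have hT0 : (0:ℝ) < T := by linarith
  have hsδ : 0 < Real.sin δ := Real.sin_pos_of_pos_of_lt_pi hδ0 (by linarith [Real.pi_pos])
  have hM0 : 0 ≤ M := le_trans (norm_nonneg _) (hM 0)
  have hbc : Continuous b := by
    have : Differentiable ℝ b := fun x => (hb x).differentiableAt
    exact this.continuous
  -- sin is nonzero on the interval
  have hsin_pos : ∀ ψ ∈ Set.uIcc δ (Real.pi - δ), Real.sin δ ≤ Real.sin ψ := by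
    intro ψ hψ
    rw [Set.uIcc_of_le (by linarith)] at hψ
    exact sin_lower hδ0 hδ hψ.1 hψ.2
  set w : ℝ → ℂ := fun ψ => Complex.I * T * ((Real.sin ψ : ℝ) : ℂ) with hw
  set w' : ℝ → ℂ := fun ψ => Complex.I * T * ((Real.cos ψ : ℝ) : ℂ) with hw'
  have hwne : ∀ ψ ∈ Set.uIcc δ (Real.pi - δ), w ψ ≠ 0 := by
    intro ψ hψ
    have h1 := hsin_pos ψ hψ
    simp only [hw]
    intro h
    rcases mul_eq_zero.mp h with h' | h'
    · rcases mul_eq_zero.mp h' with h'' | h''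
      · exact Complex.I_ne_zero h''
      · exact Complex.ofReal_ne_zero.mpr (ne_of_gt hT0) h''
    · rw [Complex.ofReal_eq_zero] at h'
      linarith
  have hwderiv : ∀ ψ : ℝ, HasDerivAt w (w' ψ) ψ := by
    intro ψ
    exact ((Real.hasDerivAt_sin ψ).ofReal_comp).const_mul (Complex.I * T)
  set u : ℝ → ℂ := fun ψ => b ψ / w ψ with hu
  set u' : ℝ → ℂ := fun ψ => (b' ψ * w ψ - b ψ * w' ψ) / (w ψ) ^ 2 with hu'
  set v : ℝ → ℂ := fun ψ => Complex.exp (Complex.I * T * ((Real.cos ψ : ℝ) : ℂ)) with hv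
  have hvderiv : ∀ ψ : ℝ, HasDerivAt v (-(w ψ) * v ψ) ψ := by
    intro ψ
    have h1 : HasDerivAt (fun ψ : ℝ => Complex.I * T * ((Real.cos ψ : ℝ) : ℂ))
        (Complex.I * T * (-Real.sin ψ : ℝ)) ψ :=
      ((Real.hasDerivAt_cos ψ).ofReal_comp).const_mul (Complex.I * T)
    have h2 := h1.cexp
    convert h2 using 1
    simp only [hv, hw]
    push_cast
    ring
  have huderiv : ∀ ψ ∈ Set.uIcc δ (Real.pi - δ), HasDerivAt u (u' ψ) ψ := by
    intro ψ hψ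
    exact (hb ψ).div (hwderiv ψ) (hwne ψ hψ)
  -- the key pointwise identity : b ψ * v ψ = -(u ψ * (-(w ψ) * v ψ))
  have hbv : ∀ ψ ∈ Set.uIcc δ (Real.pi - δ),
      b ψ * v ψ = -(u ψ * (-(w ψ) * v ψ)) := by
    intro ψ hψ
    have := hwne ψ hψ
    simp only [hu]
    field_simp
  have hIBP := intervalIntegral.integral_mul_deriv_eq_deriv_mul
    (u := u) (v := v) (u' := u') (v' := fun ψ => -(w ψ) * v ψ)
    (a := δ) (b := Real.pi - δ)
    huderiv (fun ψ _ => hvderiv ψ)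
    (by
      apply ContinuousOn.intervalIntegrable
      apply ContinuousOn.div
      · exact ((hb'c.mul (by continuity)).sub (hbc.mul (by continuity))).continuousOn
      · exact (by continuity : Continuous (fun ψ => (w ψ)^2)).continuousOn
      · intro ψ hψ
        exact pow_ne_zero 2 (hwne ψ hψ))
    (by
      apply Continuous.intervalIntegrable
      continuity)
  have step1 : (∫ ψ in δ..(Real.pi - δ), b ψ * v ψ)
      = -(∫ ψ in δ..(Real.pi - δ), u ψ * (-(w ψ) * v ψ)) := by
    rw [← intervalIntegral.integral_neg]
    exact intervalIntegral.integral_congr hbv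
  have hle : δ ≤ Real.pi - δ := by linarith
  have hwnorm : ∀ ψ, ‖w ψ‖ = T * |Real.sin ψ| := by
    intro ψ
    simp only [hw]
    rw [norm_mul, norm_mul, Complex.norm_I, one_mul, Complex.norm_real, Complex.norm_real,
      Real.norm_eq_abs, Real.norm_eq_abs, abs_of_pos hT0]
  have hw'norm : ∀ ψ, ‖w' ψ‖ ≤ T := by
    intro ψ
    simp only [hw']
    rw [norm_mul, norm_mul, Complex.norm_I, one_mul, Complex.norm_real, Complex.norm_real,
      Real.norm_eq_abs, Real.norm_eq_abs, abs_of_pos hT0]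
    nlinarith [abs_cos_le_one ψ]
  have hvnorm : ∀ ψ : ℝ, ‖v ψ‖ = 1 := by
    intro ψ
    simp only [hv]
    have : Complex.I * (T:ℂ) * ((Real.cos ψ : ℝ) : ℂ)
        = Complex.I * ((T * Real.cos ψ : ℝ) : ℂ) := by push_cast; ring
    rw [this]
    exact norm_exp_I_mul_real _
  have hunorm : ∀ ψ ∈ Set.uIcc δ (Real.pi - δ), ‖u ψ‖ ≤ M / (T * Real.sin δ) := by
    intro ψ hψ
    have h1 := hsin_pos ψ hψ
    have hsψ : 0 < Real.sin ψ := lt_of_lt_of_le hsδ h1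
    simp only [hu, norm_div]
    rw [hwnorm, abs_of_pos hsψ]
    exact div_le_div₀ hM0 (hM ψ) (by positivity)
      (mul_le_mul_of_nonneg_left h1 hT0.le)
  -- bound on the integral of u' * v
  have hbound3 : ‖∫ ψ in δ..(Real.pi - δ), u' ψ * v ψ‖ ≤ 4 * M / (T * Real.sin δ) := by
    have hint_g : IntervalIntegrable (fun ψ => 2 * M / T * (Real.sin ψ)⁻¹ ^ 2)
        volume δ (Real.pi - δ) := by
      apply ContinuousOn.intervalIntegrable
      apply ContinuousOn.mul continuousOn_const
      apply ContinuousOn.pow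
      apply ContinuousOn.inv₀ (Real.continuous_sin.continuousOn)
      intro ψ hψ
      have := hsin_pos ψ hψ; linarith
    have hstep : ‖∫ ψ in δ..(Real.pi - δ), u' ψ * v ψ‖
        ≤ ∫ ψ in δ..(Real.pi - δ), 2 * M / T * (Real.sin ψ)⁻¹ ^ 2 := by
      have habs : |∫ ψ in δ..(Real.pi - δ), 2 * M / T * (Real.sin ψ)⁻¹ ^ 2|
          = ∫ ψ in δ..(Real.pi - δ), 2 * M / T * (Real.sin ψ)⁻¹ ^ 2 := by
        apply _root_.abs_of_nonneg
        apply intervalIntegral.integral_nonneg hle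
        intro u _
        positivity
      rw [← habs]
      refine le_trans (intervalIntegral.norm_integral_le_of_norm_le hle ?_ hint_g) (le_abs_self _)
      refine Filter.Eventually.of_forall ?_
      intro t ht
      have htIcc : t ∈ Set.uIcc δ (Real.pi - δ) := by
        rw [Set.uIcc_of_le hle]
        exact ⟨le_of_lt ht.1, ht.2⟩
      have h1 := hsin_pos t htIcc
      have hsψ : 0 < Real.sin t := lt_of_lt_of_le hsδ h1
      have hs1 : Real.sin t ≤ 1 := Real.sin_le_one t
      rw [norm_mul, hvnorm, mul_one]
      have hnum : ‖b' t * w t - b t * w' t‖ ≤ M * (T * Real.sin t) + M * T := by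
        refine le_trans (norm_sub_le _ _) ?_
        rw [norm_mul (b' t) (w t), norm_mul (b t) (w' t)]
        have e1 : ‖b' t‖ * ‖w t‖ ≤ M * (T * Real.sin t) := by
          rw [hwnorm, abs_of_pos hsψ]
          exact mul_le_mul (hM' t) le_rfl (by positivity) hM0
        have e2 : ‖b t‖ * ‖w' t‖ ≤ M * T := by
          exact mul_le_mul (hM t) (hw'norm t) (norm_nonneg _) hM0
        linarith
      have hden : ‖(w t) ^ 2‖ = (T * Real.sin t) ^ 2 := by
        rw [norm_pow, hwnorm, abs_of_pos hsψ]
      have h2 : ‖u' t‖ ≤ (M * (T * Real.sin t) + M * T) / (T * Real.sin t) ^ 2 := by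
        simp only [hu', norm_div]
        rw [hden]
        exact div_le_div₀ (by positivity) hnum (by positivity) le_rfl
      refine le_trans h2 ?_
      rw [div_le_iff₀ (by positivity)]
      have hinv : (Real.sin t)⁻¹ ^ 2 * (T * Real.sin t)^2 = T^2 := by
        field_simp
      have exp1 : 2 * M / T * (Real.sin t)⁻¹ ^ 2 * (T * Real.sin t) ^ 2
          = 2 * M * T := by
        rw [mul_assoc (2 * M / T), hinv]
        field_simp
      rw [exp1]
      nlinarith [mul_le_mul_of_nonneg_left hs1 (mul_nonneg hM0 (mul_nonneg hT0.le hT0.le))]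
    refine le_trans hstep ?_
    rw [intervalIntegral.integral_const_mul, integral_inv_sin_sq hδ0 hδ]
    have hcos1 : Real.cos δ ≤ 1 := Real.cos_le_one δ
    have heq : 2 * M / T * (2 * Real.cos δ / Real.sin δ)
        = 4 * M * Real.cos δ / (T * Real.sin δ) := by
      field_simp
      ring
    rw [heq]
    apply div_le_div₀ (by positivity) (by nlinarith) (by positivity) le_rfl
  -- final combination
  have habc : ∀ ψ : ℝ, ‖u ψ * v ψ‖ = ‖u ψ‖ := fun ψ => by rw [norm_mul, hvnorm, mul_one]
  calc ‖∫ ψ in δ..(Real.pi - δ), b ψ * v ψ‖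
      = ‖∫ ψ in δ..(Real.pi - δ), u ψ * (-(w ψ) * v ψ)‖ := by rw [step1, norm_neg]
    _ = ‖u (Real.pi - δ) * v (Real.pi - δ) - u δ * v δ - ∫ ψ in δ..(Real.pi - δ), u' ψ * v ψ‖ := by
        rw [hIBP]
    _ ≤ ‖u (Real.pi - δ) * v (Real.pi - δ)‖ + ‖u δ * v δ‖ + ‖∫ ψ in δ..(Real.pi - δ), u' ψ * v ψ‖ := by
        refine le_trans (norm_sub_le _ _) ?_
        have := norm_sub_le (u (Real.pi - δ) * v (Real.pi - δ)) (u δ * v δ)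
        linarith
    _ ≤ M / (T * Real.sin δ) + M / (T * Real.sin δ) + 4 * M / (T * Real.sin δ) := by
        have e1 := hunorm (Real.pi - δ) (Set.right_mem_uIcc)
        have e2 := hunorm δ (Set.left_mem_uIcc)
        rw [habc, habc] at *
        linarith
    _ = 6 * M / (T * Real.sin δ) := by ring


lemma vdc (b b' : ℝ → ℂ) (M T : ℝ)
    (hb : ∀ x, HasDerivAt b (b' x) x) (hb'c : Continuous b')
    (hM : ∀ x, ‖b x‖ ≤ M) (hM' : ∀ x, ‖b' x‖ ≤ M) (hT : 1 ≤ T) :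
    ‖∫ ψ in (-Real.pi)..Real.pi, b ψ * Complex.exp (Complex.I * T * ((Real.cos ψ : ℝ) : ℂ))‖
      ≤ 23 * M / Real.sqrt T := by
  have hT0 : (0:ℝ) < T := by linarith
  have hM0 : 0 ≤ M := le_trans (norm_nonneg _) (hM 0)
  set S : ℝ := Real.sqrt T with hS
  have hS1 : 1 ≤ S := by
    rw [hS, show (1:ℝ) = Real.sqrt 1 by simp]
    exact Real.sqrt_le_sqrt hT
  have hS0 : (0:ℝ) < S := by linarith
  set δ : ℝ := S⁻¹ with hδdef
  have hδ0 : 0 < δ := by positivity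
  have hδ1 : δ ≤ 1 := by
    rw [hδdef]
    rw [inv_le_one_iff₀]
    right; exact hS1
  have hπ : (3:ℝ) < Real.pi := Real.pi_gt_three
  have hδπ : δ ≤ Real.pi / 2 := by linarith
  have hTδ : T * δ = S := by
    rw [hδdef, hS]
    rw [← Real.mul_self_sqrt hT0.le]
    field_simp
    rw [Real.sqrt_sq (Real.sqrt_nonneg _)]
  have hbc : Continuous b := by
    have hd : Differentiable ℝ b := fun x => (hb x).differentiableAt
    exact hd.continuous
  set f : ℝ → ℂ := fun ψ => b ψ * Complex.exp (Complex.I * T * ((Real.cos ψ : ℝ) : ℂ)) with hf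
  have hfc : Continuous f := by
    apply hbc.mul
    apply Continuous.cexp
    continuity
  have II : ∀ a c : ℝ, IntervalIntegrable f volume a c := fun a c => hfc.intervalIntegrable a c
  have hfnorm : ∀ ψ : ℝ, ‖f ψ‖ ≤ M := by
    intro ψ
    rw [hf]
    simp only []
    rw [norm_mul]
    have : Complex.I * (T:ℂ) * ((Real.cos ψ : ℝ) : ℂ)
        = Complex.I * ((T * Real.cos ψ : ℝ) : ℂ) := by push_cast; ring
    rw [this, norm_exp_I_mul_real, mul_one]
    exact hM ψ
  -- splitting
  have split : (∫ ψ in (-Real.pi)..Real.pi, f ψ)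
      = (∫ ψ in (-Real.pi)..(-Real.pi + δ), f ψ) + (∫ ψ in (-Real.pi + δ)..(-δ), f ψ)
        + (∫ ψ in (-δ)..δ, f ψ) + (∫ ψ in δ..(Real.pi - δ), f ψ)
        + (∫ ψ in (Real.pi - δ)..Real.pi, f ψ) := by
    rw [intervalIntegral.integral_add_adjacent_intervals (II (-Real.pi) (-Real.pi + δ)) (II (-Real.pi + δ) (-δ))]
    rw [intervalIntegral.integral_add_adjacent_intervals (II (-Real.pi) (-δ)) (II (-δ) δ)]
    rw [intervalIntegral.integral_add_adjacent_intervals (II (-Real.pi) δ) (II δ (Real.pi - δ))]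
    rw [intervalIntegral.integral_add_adjacent_intervals (II (-Real.pi) (Real.pi - δ)) (II (Real.pi - δ) Real.pi)]
  -- small pieces
  have small : ∀ a c : ℝ, ‖∫ ψ in a..c, f ψ‖ ≤ M * |c - a| := fun a c =>
    intervalIntegral.norm_integral_le_of_norm_le_const (fun x _ => hfnorm x)
  have s1 : ‖∫ ψ in (-Real.pi)..(-Real.pi + δ), f ψ‖ ≤ M * δ := by
    have := small (-Real.pi) (-Real.pi + δ)
    rwa [show -Real.pi + δ - -Real.pi = δ by ring, abs_of_pos hδ0] at this
  have s3 : ‖∫ ψ in (-δ)..δ, f ψ‖ ≤ M * (2 * δ) := by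
    have := small (-δ) δ
    rwa [show δ - -δ = 2 * δ by ring, abs_of_pos (by linarith)] at this
  have s5 : ‖∫ ψ in (Real.pi - δ)..Real.pi, f ψ‖ ≤ M * δ := by
    have := small (Real.pi - δ) Real.pi
    rwa [show Real.pi - (Real.pi - δ) = δ by ring, abs_of_pos hδ0] at this
  -- positive middle piece
  have mid4 : ‖∫ ψ in δ..(Real.pi - δ), f ψ‖ ≤ 6 * M / (T * Real.sin δ) :=
    ibp_piece b b' M T δ hb hb'c hM hM' hT hδ0 hδπ
  -- negative middle piece
  have mid2 : ‖∫ ψ in (-Real.pi + δ)..(-δ), f ψ‖ ≤ 6 * M / (T * Real.sin δ) := by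
    have hneg : (∫ ψ in δ..(Real.pi - δ), f (-ψ)) = ∫ ψ in (-Real.pi + δ)..(-δ), f ψ := by
      rw [intervalIntegral.integral_comp_neg f]
      rw [show -(Real.pi - δ) = -Real.pi + δ by ring]
    have heq : (∫ ψ in δ..(Real.pi - δ), f (-ψ))
        = ∫ ψ in δ..(Real.pi - δ),
            (fun x => b (-x)) ψ * Complex.exp (Complex.I * T * ((Real.cos ψ : ℝ) : ℂ)) := by
      apply intervalIntegral.integral_congr
      intro x _
      simp only [hf, Real.cos_neg]
    rw [← hneg, heq]
    apply ibp_piece (fun x => b (-x)) (fun x => -b' (-x)) M T δ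
    · intro x
      have h1 := (hb (-x)).scomp x (hasDerivAt_neg x)
      simpa [Function.comp_def] using h1
    · exact (hb'c.comp continuous_neg).neg
    · intro x; exact hM (-x)
    · intro x; rw [norm_neg]; exact hM' (-x)
    · exact hT
    · exact hδ0
    · exact hδπ
  -- lower bound on T * sin δ
  have hsin : 2 / Real.pi * δ ≤ Real.sin δ := Real.mul_le_sin hδ0.le hδπ
  have hTsin : 2 / Real.pi * S ≤ T * Real.sin δ := by
    calc 2 / Real.pi * S = T * (2 / Real.pi * δ) := by rw [← hTδ]; ring
      _ ≤ T * Real.sin δ := by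
          apply mul_le_mul_of_nonneg_left hsin hT0.le
  have hTsin0 : 0 < 2 / Real.pi * S := by positivity
  have hmidbound : 6 * M / (T * Real.sin δ) ≤ 3 * Real.pi * M / S := by
    calc 6 * M / (T * Real.sin δ) ≤ 6 * M / (2 / Real.pi * S) :=
          div_le_div_of_nonneg_left (by positivity) hTsin0 hTsin |>.trans_eq rfl
      _ = 3 * Real.pi * M / S := by
          field_simp
          ring
  -- combine
  rw [split]
  have htotal : ‖(∫ ψ in (-Real.pi)..(-Real.pi + δ), f ψ) + (∫ ψ in (-Real.pi + δ)..(-δ), f ψ)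
        + (∫ ψ in (-δ)..δ, f ψ) + (∫ ψ in δ..(Real.pi - δ), f ψ)
        + (∫ ψ in (Real.pi - δ)..Real.pi, f ψ)‖
      ≤ M * δ + 6 * M / (T * Real.sin δ) + M * (2 * δ) + 6 * M / (T * Real.sin δ) + M * δ := by
    refine le_trans (norm_add_le _ _) ?_
    have h1 := norm_add_le ((∫ ψ in (-Real.pi)..(-Real.pi + δ), f ψ) + (∫ ψ in (-Real.pi + δ)..(-δ), f ψ)
        + (∫ ψ in (-δ)..δ, f ψ)) (∫ ψ in δ..(Real.pi - δ), f ψ)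
    have h2 := norm_add_le ((∫ ψ in (-Real.pi)..(-Real.pi + δ), f ψ) + (∫ ψ in (-Real.pi + δ)..(-δ), f ψ))
        (∫ ψ in (-δ)..δ, f ψ)
    have h3 := norm_add_le (∫ ψ in (-Real.pi)..(-Real.pi + δ), f ψ) (∫ ψ in (-Real.pi + δ)..(-δ), f ψ)
    linarith
  refine le_trans htotal ?_
  have hδS : δ = 1 / S := by rw [hδdef]; ring
  have hfinal : M * δ + 3 * Real.pi * M / S + M * (2 * δ) + 3 * Real.pi * M / S + M * δ
      ≤ 23 * M / S := by
    rw [hδS]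
    rw [le_div_iff₀ hS0]
    have hSS : 3 * Real.pi * M / S * S = 3 * Real.pi * M := by field_simp
    have hSS2 : M * (1/S) * S = M := by field_simp
    have expand : (M * (1/S) + 3 * Real.pi * M / S + M * (2 * (1/S)) + 3 * Real.pi * M / S + M * (1/S)) * S
        = 4 * M + 6 * Real.pi * M := by
      field_simp
      ring
    rw [expand]
    have hπ4 : Real.pi < 3.15 := by
      have := Real.pi_lt_d2
      linarith
    nlinarith [sq_nonneg S, mul_nonneg hM0 hS0.le]
  have := hmidbound
  linarith

lemma gInt_bound (k : ℝ) (hk : 0 < k) (c c' : ℝ → ℂ) (M : ℝ)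
    (hder : ∀ x, HasDerivAt c (c' x) x) (hc' : Continuous c')
    (hMb : ∀ x, ‖c x‖ ≤ M) (hMb' : ∀ x, ‖c' x‖ ≤ M)
    (hper : Function.Periodic c (2 * Real.pi))
    (z y : EuclideanSpace ℝ (Fin 2)) (d : ℝ)
    (h1 : 1 ≤ k * d) (h2 : d ≤ ‖y - z‖) :
    ‖gInt k c z y‖ ^ 2 ≤ (23 * M) ^ 2 / (k * d) := by
  have hM0 : 0 ≤ M := le_trans (norm_nonneg _) (hMb 0)
  have hd0 : 0 < d := by nlinarith
  set r : ℝ := ‖y - z‖ with hr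
  have hr0 : 0 < r := by rw [hr]; linarith
  set T : ℝ := k * r with hT
  have hT1 : 1 ≤ T := le_trans h1 (by rw [hT]; nlinarith)
  have hT0 : 0 < T := by linarith
  obtain ⟨θ, h0θ, h1θ⟩ := exists_polar (y - z)
  have hinner : ∀ φ : ℝ, (inner ℝ (y - z) (dir φ) : ℝ) = r * Real.cos (φ - θ) := by
    intro φ
    rw [inner_dir, h0θ, h1θ, Real.cos_sub, ← hr]
    ring
  have key : (∫ φ in (-Real.pi)..Real.pi,
        c φ * Complex.exp (Complex.I * (k : ℂ) * ((inner ℝ (y - z) (dir φ) : ℝ) : ℂ)))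
      = ∫ ψ in (-Real.pi)..Real.pi,
          c (ψ + θ) * Complex.exp (Complex.I * T * ((Real.cos ψ : ℝ) : ℂ)) := by
    rw [← shift_integral c hper T θ]
    apply intervalIntegral.integral_congr
    intro φ _
    simp only [hinner]
    push_cast
    ring_nf
    congr 2
    push_cast
    rw [hT]; push_cast; ring
  have hb : ∀ x : ℝ, HasDerivAt (fun ψ => c (ψ + θ)) (c' (x + θ)) x := by
    intro x
    have h := (hder (x + θ)).scomp x ((hasDerivAt_id x).add_const θ)
    simpa [Function.comp_def] using h
  have hvdc := vdc (fun ψ => c (ψ + θ)) (fun ψ => c' (ψ + θ)) M T hb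
    (hc'.comp (by continuity)) (fun x => hMb _) (fun x => hMb' _) hT1
  have hnorm : ‖gInt k c z y‖ ≤ 23 * M / Real.sqrt T := by
    unfold gInt
    rw [norm_mul, Complex.norm_real, Real.norm_eq_abs]
    have hco : |1 / (2 * Real.pi)| ≤ 1 := by
      rw [abs_of_pos (by positivity)]
      rw [div_le_one (by positivity)]
      linarith [Real.pi_gt_three]
    calc |1 / (2 * Real.pi)| * ‖∫ φ in (-Real.pi)..Real.pi,
          c φ * Complex.exp (Complex.I * (k : ℂ) * ((inner ℝ (y - z) (dir φ) : ℝ) : ℂ))‖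
        ≤ 1 * ‖∫ φ in (-Real.pi)..Real.pi,
          c φ * Complex.exp (Complex.I * (k : ℂ) * ((inner ℝ (y - z) (dir φ) : ℝ) : ℂ))‖ :=
          mul_le_mul_of_nonneg_right hco (norm_nonneg _)
      _ = ‖∫ ψ in (-Real.pi)..Real.pi,
          c (ψ + θ) * Complex.exp (Complex.I * T * ((Real.cos ψ : ℝ) : ℂ))‖ := by rw [one_mul, key]
      _ ≤ 23 * M / Real.sqrt T := hvdc
  have hsq : ‖gInt k c z y‖ ^ 2 ≤ (23 * M / Real.sqrt T) ^ 2 :=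
    pow_le_pow_left₀ (norm_nonneg _) hnorm 2
  refine le_trans hsq ?_
  have hsqrt : (Real.sqrt T) ^ 2 = T := Real.sq_sqrt hT0.le
  have heq : (23 * M / Real.sqrt T) ^ 2 = (23 * M) ^ 2 / T := by
    rw [div_pow, hsqrt]
  rw [heq]
  apply div_le_div_of_nonneg_left (by positivity) (by linarith) (by rw [hT]; nlinarith)

def Amp (c c' : ℝ → ℂ) (M : ℝ) : Prop :=
  (∀ x, HasDerivAt c (c' x) x) ∧ Continuous c' ∧ (∀ x, ‖c x‖ ≤ M) ∧ (∀ x, ‖c' x‖ ≤ M) ∧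
    Function.Periodic c (2 * Real.pi)

lemma Amp.cont {c c' : ℝ → ℂ} {M : ℝ} (h : Amp c c' M) : Continuous c := by
  have hd : Differentiable ℝ c := fun x => (h.1 x).differentiableAt
  exact hd.continuous

def RepFam (k : ℝ) (h : EuclideanSpace ℝ (Fin 2) → EuclideanSpace ℝ (Fin 2) → ℂ) : Prop :=
  ∃ c c' M, Amp c c' M ∧ ∀ z y, h z y = gInt k c z y

lemma norm_I_mul_mul (x y : ℝ) : ‖Complex.I * (x : ℂ) * (y : ℂ)‖ = |x| * |y| := by
  rw [norm_mul, norm_mul, Complex.norm_I, one_mul, Complex.norm_real, Complex.norm_real,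
    Real.norm_eq_abs, Real.norm_eq_abs]

lemma repFam_base (k : ℝ) : RepFam k (fun z y => besselJ 0 (k * ‖y - z‖)) := by
  refine ⟨fun _ => 1, fun _ => 0, 1, ⟨?_, continuous_const, ?_, ?_, ?_⟩, ?_⟩
  · intro x; exact hasDerivAt_const x 1
  · intro x; simp
  · intro x; simp
  · intro x; rfl
  · intro z y; exact besselJ_eq_gInt k z y

lemma repFam_step (k : ℝ) (i : Fin 2)
    {h : EuclideanSpace ℝ (Fin 2) → EuclideanSpace ℝ (Fin 2) → ℂ}
    (hrep : RepFam k h) : RepFam k (fun z => pd i (h z)) := by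
  obtain ⟨c, c', M, ⟨hder, hc', hMb, hMb', hper⟩, heq⟩ := hrep
  have hM0 : 0 ≤ M := le_trans (norm_nonneg _) (hMb 0)
  have hcc : Continuous c := Amp.cont ⟨hder, hc', hMb, hMb', hper⟩
  obtain ⟨a, a', hfun, ha, hacont, ha'c, ha1, ha'1, haper⟩ :
      ∃ a a' : ℝ → ℝ, ((fun t => (dir t i : ℝ)) = a) ∧ (∀ t, HasDerivAt a (a' t) t) ∧
        Continuous a ∧ Continuous a' ∧ (∀ t, |a t| ≤ 1) ∧ (∀ t, |a' t| ≤ 1) ∧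
        Function.Periodic a (2 * Real.pi) := by
    fin_cases i
    · exact ⟨Real.cos, fun t => -Real.sin t, rfl, fun t => Real.hasDerivAt_cos t,
        Real.continuous_cos, Real.continuous_sin.neg,
        fun t => Real.abs_cos_le_one t, fun t => by rw [abs_neg]; exact Real.abs_sin_le_one t,
        Real.cos_periodic⟩
    · exact ⟨Real.sin, Real.cos, rfl, fun t => Real.hasDerivAt_sin t,
        Real.continuous_sin, Real.continuous_cos,
        fun t => Real.abs_sin_le_one t, fun t => Real.abs_cos_le_one t,
        Real.sin_periodic⟩
  refine ⟨fun t => (Complex.I * (k : ℂ) * ((a t : ℝ) : ℂ)) * c t,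
    fun t => (Complex.I * (k : ℂ) * ((a' t : ℝ) : ℂ)) * c t
      + (Complex.I * (k : ℂ) * ((a t : ℝ) : ℂ)) * c' t,
    2 * |k| * M + 1, ⟨?_, ?_, ?_, ?_, ?_⟩, ?_⟩
  · intro t
    have h1 : HasDerivAt (fun t => Complex.I * (k : ℂ) * ((a t : ℝ) : ℂ))
        (Complex.I * (k : ℂ) * ((a' t : ℝ) : ℂ)) t :=
      ((ha t).ofReal_comp).const_mul (Complex.I * (k : ℂ))
    exact h1.mul (hder t)
  · apply Continuous.add
    · exact (continuous_const.mul (Complex.continuous_ofReal.comp ha'c)).mul hcc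
    · exact (continuous_const.mul (Complex.continuous_ofReal.comp hacont)).mul hc'
  · intro t
    rw [norm_mul, norm_I_mul_mul]
    have : |k| * |a t| * ‖c t‖ ≤ |k| * 1 * M := by
      apply mul_le_mul _ (hMb t) (norm_nonneg _) (by positivity)
      exact mul_le_mul_of_nonneg_left (ha1 t) (abs_nonneg k)
    nlinarith [abs_nonneg k]
  · intro t
    refine le_trans (norm_add_le _ _) ?_
    have n1 : ‖(Complex.I * (k : ℂ) * ((a' t : ℝ) : ℂ)) * c t‖ = |k| * |a' t| * ‖c t‖ := by
      rw [norm_mul (Complex.I * (k : ℂ) * ((a' t : ℝ) : ℂ)) (c t), norm_I_mul_mul]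
    have n2 : ‖(Complex.I * (k : ℂ) * ((a t : ℝ) : ℂ)) * c' t‖ = |k| * |a t| * ‖c' t‖ := by
      rw [norm_mul (Complex.I * (k : ℂ) * ((a t : ℝ) : ℂ)) (c' t), norm_I_mul_mul]
    rw [n1, n2]
    have e1 : |k| * |a' t| * ‖c t‖ ≤ |k| * 1 * M := by
      apply mul_le_mul _ (hMb t) (norm_nonneg _) (by positivity)
      exact mul_le_mul_of_nonneg_left (ha'1 t) (abs_nonneg k)
    have e2 : |k| * |a t| * ‖c' t‖ ≤ |k| * 1 * M := by
      apply mul_le_mul _ (hMb' t) (norm_nonneg _) (by positivity)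
      exact mul_le_mul_of_nonneg_left (ha1 t) (abs_nonneg k)
    nlinarith [abs_nonneg k]
  · intro x
    simp only []
    rw [haper x, hper x]
  · intro z y
    show pd i (h z) y = _
    have hz : h z = gInt k c z := funext fun y => heq z y
    have hre : pd i (h z) = pd i (gInt k c z) := by rw [hz]
    rw [hre, pd_gInt k c z hcc i]
    have : (fun t => (Complex.I * (k : ℂ) * ((dir t i : ℝ) : ℂ)) * c t)
        = (fun t => (Complex.I * (k : ℂ) * ((a t : ℝ) : ℂ)) * c t) := by
      funext t
      rw [show (dir t i : ℝ) = a t from congrFun hfun t]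
    rw [this]

lemma repFam_iter (k : ℝ) (i : Fin 2)
    {h : EuclideanSpace ℝ (Fin 2) → EuclideanSpace ℝ (Fin 2) → ℂ}
    (hrep : RepFam k h) (n : ℕ) : RepFam k (fun z => (pd i)^[n] (h z)) := by
  induction n with
  | zero => simpa using hrep
  | succ n ih =>
      have hstep := repFam_step k i ih
      have : (fun z => (pd i)^[n + 1] (h z)) = (fun z => pd i ((pd i)^[n] (h z))) := by
        funext z
        rw [Function.iterate_succ_apply']
      rw [this]
      exact hstep

lemma repFam_main (k : ℝ) (s t : ℕ) :
    RepFam k (fun z => (pd 0)^[s] ((pd 1)^[t] (fun y => besselJ 0 (k * ‖y - z‖)))) := by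
  have h0 := repFam_base k
  have h1 := repFam_iter k 1 h0 t
  have h2 := repFam_iter k 0 h1 s
  exact h2

/-- For `k > 0`, any `q ∈ ℕ`, and a bounded measurable set `D ⊂ ℝ²`, the squared
`H^q(D)`-norm of `x ↦ J₀(k|x−z|)` decays like `1/dist(z,D)`: there are `C > 0` and
`R > 0` such that for every `z` with `dist(z, D) ≥ R`,
`Σ_{s+t ≤ q} ∫_D |∂₁^s ∂₂^t J₀(k|x−z|)|² dx ≤ C / dist(z, D)`. -/
theorem besselJ_Hq_decay (k : ℝ) (hk : 0 < k) (q : ℕ)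
    (D : Set (EuclideanSpace ℝ (Fin 2)))
    (hDb : Bornology.IsBounded D) (hDm : MeasurableSet D) :
    ∃ C > (0:ℝ), ∃ R > (0:ℝ), ∀ z : EuclideanSpace ℝ (Fin 2),
      R ≤ Metric.infDist z D →
        (∑ p ∈ (Finset.range (q + 1) ×ˢ Finset.range (q + 1)).filter
              (fun p => p.1 + p.2 ≤ q),
            ∫ x in D,
              ‖(pd 0)^[p.1] ((pd 1)^[p.2] (fun y => besselJ 0 (k * ‖y - z‖))) x‖ ^ 2) ≤
          C / Metric.infDist z D := by
  set R : ℝ := max 1 k⁻¹ with hR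
  have hR0 : (0:ℝ) < R := lt_of_lt_of_le one_pos (le_max_left _ _)
  have hkR : 1 ≤ k * R := by
    have : k * k⁻¹ ≤ k * R := mul_le_mul_of_nonneg_left (le_max_right _ _) hk.le
    rwa [mul_inv_cancel₀ hk.ne'] at this
  have hvol : volume D < ⊤ := hDb.measure_lt_top
  set V : ℝ := (volume D).toReal with hV
  have hV0 : 0 ≤ V := ENNReal.toReal_nonneg
  -- per-index bound
  have key : ∀ p : ℕ × ℕ, ∃ Cp : ℝ, 0 < Cp ∧ ∀ z : EuclideanSpace ℝ (Fin 2),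
      R ≤ Metric.infDist z D →
      (∫ x in D, ‖(pd 0)^[p.1] ((pd 1)^[p.2] (fun y => besselJ 0 (k * ‖y - z‖))) x‖ ^ 2)
        ≤ Cp / Metric.infDist z D := by
    intro p
    obtain ⟨c, c', M, hamp, heq⟩ := repFam_main k p.1 p.2
    obtain ⟨hder, hc', hMb, hMb', hper⟩ := hamp
    refine ⟨(23 * M) ^ 2 * V / k + 1, by positivity, ?_⟩
    intro z hz
    set d : ℝ := Metric.infDist z D with hd
    have hd0 : 0 < d := lt_of_lt_of_le hR0 hz
    have hkd : 1 ≤ k * d := le_trans hkR (mul_le_mul_of_nonneg_left hz hk.le)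
    have hxz : ∀ x ∈ D, d ≤ ‖x - z‖ := by
      intro x hx
      have h1 : Metric.infDist z D ≤ dist z x := Metric.infDist_le_dist_of_mem hx
      rwa [dist_eq_norm, norm_sub_rev] at h1
    have hfun : (fun x => ‖(pd 0)^[p.1] ((pd 1)^[p.2] (fun y => besselJ 0 (k * ‖y - z‖))) x‖ ^ 2)
        = fun x => ‖gInt k c z x‖ ^ 2 := by
      funext x
      exact congrArg (fun w : ℂ => ‖w‖ ^ 2) (heq z x)
    rw [hfun]
    have hptw : ∀ x ∈ D, ‖gInt k c z x‖ ^ 2 ≤ (23 * M) ^ 2 / (k * d) := fun x hx =>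
      gInt_bound k hk c c' M hder hc' hMb hMb' hper z x d hkd (hxz x hx)
    have hintle : (∫ x in D, ‖gInt k c z x‖ ^ 2) ≤ ((23 * M) ^ 2 / (k * d)) * V := by
      have h2 : ‖∫ x in D, ‖gInt k c z x‖ ^ 2‖ ≤ ((23 * M) ^ 2 / (k * d)) * V := by
        apply norm_setIntegral_le_of_norm_le_const hvol
        intro x hx
        rw [Real.norm_eq_abs, _root_.abs_of_nonneg (by positivity)]
        exact hptw x hx
      calc (∫ x in D, ‖gInt k c z x‖ ^ 2) ≤ ‖∫ x in D, ‖gInt k c z x‖ ^ 2‖ := le_abs_self _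
        _ ≤ ((23 * M) ^ 2 / (k * d)) * V := h2
    refine le_trans hintle ?_
    have heq2 : ((23 * M) ^ 2 / (k * d)) * V = ((23 * M) ^ 2 * V / k) / d := by
      field_simp
    rw [heq2, div_le_div_iff_of_pos_right hd0]
    linarith
  choose Cp hCp0 hCpb using key
  set S := (Finset.range (q + 1) ×ˢ Finset.range (q + 1)).filter (fun p => p.1 + p.2 ≤ q) with hS
  have hsum0 : 0 ≤ ∑ p ∈ S, Cp p := Finset.sum_nonneg fun p _ => (hCp0 p).le
  refine ⟨(∑ p ∈ S, Cp p) + 1, by linarith, R, hR0, ?_⟩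
  intro z hz
  have hd0 : 0 < Metric.infDist z D := lt_of_lt_of_le hR0 hz
  calc (∑ p ∈ S, ∫ x in D,
        ‖(pd 0)^[p.1] ((pd 1)^[p.2] (fun y => besselJ 0 (k * ‖y - z‖))) x‖ ^ 2)
      ≤ ∑ p ∈ S, Cp p / Metric.infDist z D :=
        Finset.sum_le_sum (fun p _ => hCpb p z hz)
    _ = (∑ p ∈ S, Cp p) / Metric.infDist z D := by rw [Finset.sum_div]
    _ ≤ ((∑ p ∈ S, Cp p) + 1) / Metric.infDist z D := by
        rw [div_le_div_iff_of_pos_right hd0]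
        linarith
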